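/- Let f be the generic monic polynomial of degree n, i.e., f(t) = t^n - f_1 t^{n-1} + ... + (-1)^n f_n where f_1,...,f_n are algebraically independent variables over a ring A. Then there is an A-algebra isomorphism from the splitting algebra A[f_1,...,f_n]_f to the polynomial ring A[t_1,...,t_n] sending the universal root τ_i to t_i and f_i to the i-th elementary symmetric polynomial s_i. -/

import Mathlib

open MvPolynomial Polynomial

/-- The ideal `(s₁ - f₁, ..., sₙ - fₙ)` defining the splitting algebra, where
`fᵢ = (-1)^i · coeff f (n - i)` are the signed coefficients of `f`. -/
noncomputable def splittingIdeal (A : Type*) [CommRing A] (f : Polynomial A) (n : ℕ) :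
    Ideal (MvPolynomial (Fin n) A) :=
  Ideal.span (Set.range fun i : Fin n =>
    esymm (Fin n) A ((i : ℕ) + 1) -
      MvPolynomial.C ((-1 : A) ^ ((i : ℕ) + 1) * f.coeff (n - ((i : ℕ) + 1))))

/-- The splitting algebra `A_f = A[t₁,...,tₙ]/(s₁ - f₁, ..., sₙ - fₙ)`. -/
noncomputable def SplittingAlgebra (A : Type*) [CommRing A] (f : Polynomial A) (n : ℕ) :=
  MvPolynomial (Fin n) A ⧸ splittingIdeal A f n

noncomputable instance (A : Type*) [CommRing A] (f : Polynomial A) (n : ℕ) :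
    CommRing (SplittingAlgebra A f n) := Ideal.Quotient.commRing _

noncomputable instance (R A : Type*) [CommSemiring R] [CommRing A] [Algebra R A]
    (f : Polynomial A) (n : ℕ) : Algebra R (SplittingAlgebra A f n) :=
  Ideal.Quotient.algebra R

/-- The universal roots `τᵢ` of `f` in the splitting algebra. -/
noncomputable def univRoot (A : Type*) [CommRing A] (f : Polynomial A) (n : ℕ) (i : Fin n) :
    SplittingAlgebra A f n :=
  Ideal.Quotient.mk (splittingIdeal A f n) (MvPolynomial.X i)

/-- The action of a permutation `σ` on the splitting algebra, sending `τᵢ` to `τ_{σ⁻¹ i}`. -/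
noncomputable def permHom (A : Type*) [CommRing A] (f : Polynomial A) (n : ℕ)
    (σ : Equiv.Perm (Fin n)) : SplittingAlgebra A f n →ₐ[A] SplittingAlgebra A f n :=
  Ideal.Quotient.liftₐ (splittingIdeal A f n)
    ((Ideal.Quotient.mkₐ A (splittingIdeal A f n)).comp
      (rename (σ.symm : Fin n → Fin n)))
    (by
      intro a ha
      have h : splittingIdeal A f n ≤ RingHom.ker
          ((Ideal.Quotient.mkₐ A (splittingIdeal A f n)).comp
            (rename (σ.symm : Fin n → Fin n))) := by
        rw [splittingIdeal, Ideal.span_le]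
        rintro _ ⟨i, rfl⟩
        have : (rename (σ.symm : Fin n → Fin n))
            (esymm (Fin n) A ((i : ℕ) + 1) -
              MvPolynomial.C ((-1 : A) ^ ((i : ℕ) + 1) * f.coeff (n - ((i : ℕ) + 1)))) =
            esymm (Fin n) A ((i : ℕ) + 1) -
              MvPolynomial.C ((-1 : A) ^ ((i : ℕ) + 1) * f.coeff (n - ((i : ℕ) + 1))) := by
          rw [map_sub, rename_esymm, rename_C]
        simp only [SetLike.mem_coe, RingHom.mem_ker, AlgHom.coe_comp, Function.comp_apply, this]
        rw [Ideal.Quotient.mkₐ_eq_mk, Ideal.Quotient.eq_zero_iff_mem]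
        exact Ideal.subset_span ⟨i, rfl⟩
      exact h ha)


/-- For the generic monic polynomial `f` of degree `n` (whose coefficients are independent
variables over `A`), the splitting algebra of `f` over `A[f₁,...,fₙ]` is `A`-isomorphic to the
polynomial ring `A[t₁,...,tₙ]`, sending `τᵢ ↦ tᵢ` and `fᵢ ↦ sᵢ`. -/
theorem generic_splittingAlgebra_iso_polynomialRing (A : Type*) [CommRing A] (n : ℕ) :
    ∃ e : SplittingAlgebra (MvPolynomial (Fin n) A) (Polynomial.X ^ n + ∑ i : Fin n, Polynomial.C ((-1 : MvPolynomial (Fin n) A) ^ ((i : ℕ) + 1) * MvPolynomial.X i) * Polynomial.X ^ (n - ((i : ℕ) + 1))) n ≃ₐ[A] MvPolynomial (Fin n) A,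
      (∀ i : Fin n,
        e (univRoot (MvPolynomial (Fin n) A) (Polynomial.X ^ n + ∑ i : Fin n, Polynomial.C ((-1 : MvPolynomial (Fin n) A) ^ ((i : ℕ) + 1) * MvPolynomial.X i) * Polynomial.X ^ (n - ((i : ℕ) + 1))) n i) = MvPolynomial.X i) ∧
      (∀ i : Fin n,
        e (algebraMap (MvPolynomial (Fin n) A)
            (SplittingAlgebra (MvPolynomial (Fin n) A) (Polynomial.X ^ n + ∑ i : Fin n, Polynomial.C ((-1 : MvPolynomial (Fin n) A) ^ ((i : ℕ) + 1) * MvPolynomial.X i) * Polynomial.X ^ (n - ((i : ℕ) + 1))) n) (MvPolynomial.X i)) =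
          esymm (Fin n) A ((i : ℕ) + 1)) := by
  classical
  set B := MvPolynomial (Fin n) A with hB
  set f : Polynomial B := Polynomial.X ^ n + ∑ i : Fin n,
      Polynomial.C ((-1 : B) ^ ((i : ℕ) + 1) * MvPolynomial.X i) *
        Polynomial.X ^ (n - ((i : ℕ) + 1)) with hf
  have hcoeff : ∀ i : Fin n,
      (-1 : B) ^ ((i : ℕ) + 1) * f.coeff (n - ((i : ℕ) + 1)) = MvPolynomial.X i := by
    intro i
    have hi1 : (i : ℕ) + 1 ≤ n := i.isLt
    rw [hf, Polynomial.coeff_add, Polynomial.coeff_X_pow,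
      if_neg (by omega : ¬ (n - ((i : ℕ) + 1) = n)), Polynomial.finset_sum_coeff, zero_add]
    have hsum : ∀ j : Fin n,
        (Polynomial.C ((-1 : B) ^ ((j : ℕ) + 1) * MvPolynomial.X j) *
          Polynomial.X ^ (n - ((j : ℕ) + 1))).coeff (n - ((i : ℕ) + 1))
        = if j = i then (-1 : B) ^ ((i : ℕ) + 1) * MvPolynomial.X i else 0 := by
      intro j
      rw [Polynomial.coeff_C_mul, Polynomial.coeff_X_pow]
      by_cases h : j = i
      · subst h; simp
      · have hne : ¬ (n - ((i : ℕ) + 1) = n - ((j : ℕ) + 1)) := by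
          have := j.isLt
          intro hc; exact h (Fin.ext (by omega))
        rw [if_neg hne, mul_zero, if_neg h]
    rw [Finset.sum_congr rfl fun j _ => hsum j,
      Finset.sum_ite_eq' Finset.univ i (fun _ => (-1 : B) ^ ((i : ℕ) + 1) * MvPolynomial.X i),
      if_pos (Finset.mem_univ i), ← mul_assoc, ← mul_pow, neg_mul_neg, one_mul, one_pow, one_mul]
  -- the map φ : A[f][t] → A[t], sending tᵢ ↦ tᵢ and fⱼ ↦ sⱼ
  set g : B →ₐ[A] MvPolynomial (Fin n) A :=
    MvPolynomial.aeval (fun j : Fin n => esymm (Fin n) A ((j : ℕ) + 1)) with hg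
  set φ : MvPolynomial (Fin n) B →ₐ[A] MvPolynomial (Fin n) A :=
    MvPolynomial.aevalTower g (fun i : Fin n => MvPolynomial.X i) with hφ
  have hφX : ∀ i : Fin n, φ (MvPolynomial.X i) = MvPolynomial.X i := by
    intro i; rw [hφ, MvPolynomial.aevalTower_X]
  have hφesymm : ∀ k : ℕ, φ (esymm (Fin n) B k) = esymm (Fin n) A k := by
    intro k
    simp only [esymm, map_sum, map_prod, hφ, MvPolynomial.aevalTower_X]
  have hφC : ∀ j : Fin n,
      φ (MvPolynomial.C (MvPolynomial.X j)) = esymm (Fin n) A ((j : ℕ) + 1) := by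
    intro j
    rw [hφ, MvPolynomial.aevalTower_C, hg, MvPolynomial.aeval_X]
  have hker : ∀ a ∈ splittingIdeal B f n, φ a = 0 := by
    intro a ha
    have h : splittingIdeal B f n ≤ RingHom.ker φ := by
      rw [splittingIdeal, Ideal.span_le]
      rintro _ ⟨i, rfl⟩
      simp only [SetLike.mem_coe, RingHom.mem_ker, map_sub, hcoeff i, hφesymm, hφC, sub_self]
    exact h ha
  set e0 : SplittingAlgebra B f n →ₐ[A] MvPolynomial (Fin n) A :=
    Ideal.Quotient.liftₐ (splittingIdeal B f n) φ hker with he0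
  set ψ : MvPolynomial (Fin n) A →ₐ[A] SplittingAlgebra B f n :=
    MvPolynomial.aeval (univRoot B f n) with hψ
  have hmk : ∀ p : MvPolynomial (Fin n) B,
      e0 (Ideal.Quotient.mk (splittingIdeal B f n) p) = φ p := fun p => rfl
  have hψesymm : ∀ k : ℕ, ψ (esymm (Fin n) A k)
      = Ideal.Quotient.mk (splittingIdeal B f n) (esymm (Fin n) B k) := by
    intro k
    simp only [esymm, map_sum, map_prod, hψ, MvPolynomial.aeval_X, univRoot]
    rfl
  have hrel : ∀ j : Fin n,
      Ideal.Quotient.mk (splittingIdeal B f n) (esymm (Fin n) B ((j : ℕ) + 1))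
        = Ideal.Quotient.mk (splittingIdeal B f n) (MvPolynomial.C (MvPolynomial.X j)) := by
    intro j
    rw [Ideal.Quotient.eq, splittingIdeal]
    refine Ideal.subset_span ⟨j, ?_⟩
    simp only [hcoeff]
  have hψX : ∀ i : Fin n,
      ψ (MvPolynomial.X i) = Ideal.Quotient.mk (splittingIdeal B f n) (MvPolynomial.X i) := by
    intro i; rw [hψ, MvPolynomial.aeval_X]; rfl
  have h1 : e0.comp ψ = AlgHom.id A (MvPolynomial (Fin n) A) := by
    apply MvPolynomial.algHom_ext
    intro i
    rw [AlgHom.comp_apply, hψX, hmk, hφX, AlgHom.id_apply]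
  have hC : ∀ b : B, ψ (e0 (Ideal.Quotient.mk (splittingIdeal B f n) (MvPolynomial.C b)))
      = Ideal.Quotient.mk (splittingIdeal B f n) (MvPolynomial.C b) := by
    intro b
    induction b using MvPolynomial.induction_on with
    | C a =>
      have h1 : (Ideal.Quotient.mk (splittingIdeal B f n))
          (MvPolynomial.C (MvPolynomial.C a : B))
          = algebraMap A (SplittingAlgebra B f n) a := rfl
      rw [h1, AlgHom.commutes, AlgHom.commutes]
    | add p q hp hq =>
      rw [show (MvPolynomial.C (p + q) : MvPolynomial (Fin n) B)
          = MvPolynomial.C p + MvPolynomial.C q from map_add _ _ _]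
      rw [map_add]; erw [map_add, map_add]; rw [hp, hq]; rfl
    | mul_X p j hp =>
      rw [show (MvPolynomial.C (p * MvPolynomial.X j) : MvPolynomial (Fin n) B)
          = MvPolynomial.C p * MvPolynomial.C (MvPolynomial.X j) from map_mul _ _ _]
      rw [map_mul]; erw [map_mul, map_mul]; rw [hp, hmk, hφC, hψesymm, hrel]; rfl
  have h2mk : ∀ p : MvPolynomial (Fin n) B,
      ψ (e0 (Ideal.Quotient.mk (splittingIdeal B f n) p))
        = Ideal.Quotient.mk (splittingIdeal B f n) p := by
    intro p
    induction p using MvPolynomial.induction_on with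
    | C b => exact hC b
    | add p q hp hq => rw [map_add]; erw [map_add, map_add]; rw [hp, hq]; rfl
    | mul_X p j hp => rw [map_mul]; erw [map_mul, map_mul]; rw [hp, hmk, hφX, hψX]; rfl
  have h2' : ψ.comp e0 = AlgHom.id A (SplittingAlgebra B f n) := by
    apply AlgHom.ext
    intro x
    obtain ⟨p, rfl⟩ := Ideal.Quotient.mk_surjective (I := splittingIdeal B f n) x
    exact h2mk p
  refine ⟨AlgEquiv.ofAlgHom e0 ψ h1 h2', ?_, ?_⟩
  · intro i
    show e0 (univRoot B f n i) = MvPolynomial.X i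
    rw [univRoot, hmk, hφX]
  · intro i
    show e0 (algebraMap B (SplittingAlgebra B f n) (MvPolynomial.X i)) = _
    have h1 : algebraMap B (SplittingAlgebra B f n) (MvPolynomial.X i)
        = Ideal.Quotient.mk (splittingIdeal B f n) (MvPolynomial.C (MvPolynomial.X i)) := rfl
    rw [h1, hmk, hφC]
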